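/- Let n, d, m ∈ ℕ, let 0 < ε_d ≤ 0.4, 0 < ε ≤ 0.4, 0 < δ ≤ 0.4, and fix u_1,…,u_n ∈ {−1/√n, 1/√n}. Let S satisfy Assumption(ψ, φ) with ψ ≤ 0.1 and φ ≤ ε_d/(4mn), and suppose θ = (w_1,…,w_n) is an (ε, δ)-approximate KKT point of the margin-maximization problem w.r.t. S with multipliers λ_1,…,λ_m. Fix l ∈ [m], set c = ε_d/(2mn), Δ_j = c·Σ_{k∈[m], k≠l} sign(⟨x_k, w_j⟩)·x_k, ŵ_j = w_j − u_j λ_l y_l σ'_{l,j}(θ) x_l, and w̃_j = ŵ_j + |u_j| λ_l σ'_{l,j}(θ) Δ_j, with θ̃ = (w̃_1,…,w̃_n). Then for every r ∈ [m] with r ≠ l: −9·ε_d/(m·n) ≤ y_r·(N(θ̃, x_r) − N(θ, x_r)) ≤ 9·ε_d/(m·n). -/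

import Mathlib

/-- ReLU activation-pattern indicator: `σ'(w, x) = 1` if `⟨w, x⟩ ≥ 0` and `0` otherwise. -/
noncomputable def act {d : ℕ} (w x : EuclideanSpace ℝ (Fin d)) : ℝ :=
  if 0 ≤ (inner ℝ w x : ℝ) then 1 else 0

/-- Two-layer ReLU network with fixed second layer `u` and first-layer weights `θ`. -/
noncomputable def net {n d : ℕ} (u : Fin n → ℝ)
    (θ : Fin n → EuclideanSpace ℝ (Fin d)) (x : EuclideanSpace ℝ (Fin d)) : ℝ :=
  ∑ j, u j * max ((inner ℝ (θ j) x : ℝ)) 0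

/-- `sign(z) = 1` if `z ≥ 0`, and `-1` otherwise. -/
noncomputable def sgn (z : ℝ) : ℝ := if 0 ≤ z then 1 else -1


lemma max_eq_act_mul {d : ℕ} (w x : EuclideanSpace ℝ (Fin d)) :
    max ((inner ℝ w x : ℝ)) 0 = act w x * (inner ℝ w x : ℝ) := by
  unfold act; split
  · rw [max_eq_left ‹_›, one_mul]
  · rw [max_eq_right (le_of_lt (not_le.mp ‹_›)), zero_mul]

lemma act01 {d : ℕ} (w x : EuclideanSpace ℝ (Fin d)) : act w x = 0 ∨ act w x = 1 := by
  unfold act; split; exacts [Or.inr rfl, Or.inl rfl]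

lemma act_nonneg {d : ℕ} (w x : EuclideanSpace ℝ (Fin d)) : 0 ≤ act w x := by
  rcases act01 w x with h | h <;> rw [h] <;> norm_num

lemma act_le_one {d : ℕ} (w x : EuclideanSpace ℝ (Fin d)) : act w x ≤ 1 := by
  rcases act01 w x with h | h <;> rw [h] <;> norm_num

lemma abs_sgn_eq_one (z : ℝ) : |sgn z| = 1 := by
  unfold sgn; split <;> simp

set_option maxHeartbeats 16000000 in

/-- The margins of the corrected unlearned network `θ̃` on the retained data
points differ from those of the original network by at most `9 εd/(mn)` in absolute value. -/
theorem stmt_16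
    (n d m : ℕ)
    (ε δ εd ψ φ : ℝ)
    (hεdpos : 0 < εd) (hεdle : εd ≤ 0.4)
    (hεpos : 0 < ε) (hεle : ε ≤ 0.4)
    (hδpos : 0 < δ) (hδle : δ ≤ 0.4)
    (hψ : ψ ≤ 0.1) (hφ : φ ≤ εd / (4 * m * n))
    (u : Fin n → ℝ)
    (hu : ∀ j, u j = -(1 / Real.sqrt n) ∨ u j = 1 / Real.sqrt n)
    (x : Fin m → EuclideanSpace ℝ (Fin d)) (y : Fin m → ℝ)
    (hy : ∀ i, y i = 1 ∨ y i = -1)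
    (hnorm : ∀ i, 1 - ψ ≤ ‖x i‖ ^ 2 ∧ ‖x i‖ ^ 2 ≤ 1 + ψ)
    (hortho : ∀ i j, i ≠ j → |(inner ℝ (x i) (x j) : ℝ)| ≤ φ)
    (θ : Fin n → EuclideanSpace ℝ (Fin d)) (lam : Fin m → ℝ)
    (hlam : ∀ i, 0 ≤ lam i)
    (hstat : Real.sqrt (∑ j, ‖θ j - u j • ∑ i, (lam i * y i * act (θ j) (x i)) • x i‖ ^ 2) ≤ ε)
    (hcs : ∀ i, lam i * (y i * net u θ (x i) - 1) ≤ δ)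
    (hpf : ∀ i, 1 ≤ y i * net u θ (x i))
    (l : Fin m)
    (θt : Fin n → EuclideanSpace ℝ (Fin d))
    (hθt : ∀ j, θt j = (θ j - (u j * lam l * y l * act (θ j) (x l)) • x l) +
        (|u j| * lam l * act (θ j) (x l)) •
          ((εd / (2 * m * n)) •
            ∑ k ∈ Finset.univ.erase l, sgn ((inner ℝ (x k) (θ j) : ℝ)) • x k)) :
    ∀ r, r ≠ l →
      -(9 * εd / (m * n)) ≤ y r * (net u θt (x r) - net u θ (x r)) ∧
      y r * (net u θt (x r) - net u θ (x r)) ≤ 9 * εd / (m * n) := by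
  intro r hrl
  rcases Nat.eq_zero_or_pos n with hn | hnpos
  · subst hn
    simp [net]
  have hm2 : 2 ≤ m := by
    have h1 := r.isLt; have h2 := l.isLt
    have : r.val ≠ l.val := fun h => hrl (Fin.ext h)
    omega
  have hN1 : (1:ℝ) ≤ (n:ℝ) := by exact_mod_cast hnpos
  have hM2 : (2:ℝ) ≤ (m:ℝ) := by exact_mod_cast hm2
  have hNpos : (0:ℝ) < n := by linarith
  have hMpos : (0:ℝ) < m := by linarith
  have hφ0 : 0 ≤ φ := le_trans (abs_nonneg _) (hortho r l hrl)
  -- basic facts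
  have husq : ∀ j, u j ^ 2 = 1 / n := by
    intro j
    have hs : Real.sqrt n ^ 2 = n := Real.sq_sqrt (Nat.cast_nonneg n)
    rcases hu j with h | h <;> rw [h] <;> simp [div_pow, hs]
  have hsumu : (∑ j, u j ^ 2) = 1 := by
    rw [Finset.sum_congr rfl fun j _ => husq j, Finset.sum_const, Finset.card_univ,
      Fintype.card_fin, nsmul_eq_mul]
    field_simp
  have hy2 : ∀ i, y i * y i = 1 := fun i => by rcases hy i with h | h <;> rw [h] <;> norm_num
  have hyabs : ∀ i, |y i| = 1 := fun i => by rcases hy i with h | h <;> rw [h] <;> norm_num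
  have hxsqub : ∀ i, ‖x i‖ ^ 2 ≤ 1.1 := fun i => by have := (hnorm i).2; linarith
  have hxsqlb : ∀ i, 0.9 ≤ ‖x i‖ ^ 2 := fun i => by have := (hnorm i).1; linarith
  have hxub : ∀ i, ‖x i‖ ≤ 1.05 := by
    intro i
    nlinarith [norm_nonneg (x i), hxsqub i]
  obtain ⟨v, hvdef⟩ : ∃ v : Fin n → EuclideanSpace ℝ (Fin d),
      v = fun j => u j • ∑ i, (lam i * y i * act (θ j) (x i)) • x i := ⟨_, rfl⟩
  obtain ⟨A, hAdef⟩ : ∃ A : Fin m → ℝ,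
      A = fun i => ∑ j, u j ^ 2 * act (θ j) (x i) := ⟨_, rfl⟩
  have hA0 : ∀ i, 0 ≤ A i := by
    intro i; rw [hAdef]
    exact Finset.sum_nonneg fun j _ => mul_nonneg (sq_nonneg _) (act_nonneg _ _)
  have hA1 : ∀ i, A i ≤ 1 := by
    intro i
    rw [hAdef]
    calc (∑ j, u j ^ 2 * act (θ j) (x i)) ≤ ∑ j, u j ^ 2 * 1 :=
          Finset.sum_le_sum fun j _ => mul_le_mul_of_nonneg_left (act_le_one _ _) (sq_nonneg _)
      _ = 1 := by simpa using hsumu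
  -- stationarity consequences
  have hstat' : Real.sqrt (∑ j, ‖θ j - v j‖ ^ 2) ≤ ε := by
    simp only [hvdef]; exact hstat
  have hstat2 : ∑ j, ‖θ j - v j‖ ^ 2 ≤ ε ^ 2 := by
    have h0 : (0:ℝ) ≤ ∑ j, ‖θ j - v j‖ ^ 2 :=
      Finset.sum_nonneg fun j _ => sq_nonneg _
    nlinarith [Real.sq_sqrt h0, Real.sqrt_nonneg (∑ j, ‖θ j - v j‖ ^ 2)]
  have hCS : ∑ j, |u j| * ‖θ j - v j‖ ≤ ε := by
    have h := Finset.sum_mul_sq_le_sq_mul_sq Finset.univ (fun j => |u j|) (fun j => ‖θ j - v j‖)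
    have h1 : (∑ j, |u j| ^ 2) = 1 := by simpa [sq_abs] using hsumu
    rw [h1, one_mul] at h
    have h2 : (0:ℝ) ≤ ∑ j, |u j| * ‖θ j - v j‖ :=
      Finset.sum_nonneg fun j _ => mul_nonneg (abs_nonneg _) (norm_nonneg _)
    nlinarith [h, h2, hstat2]
  -- network rewriting
  have hnet : ∀ p, net u θ (x p) = ∑ j, u j * (act (θ j) (x p) * (inner ℝ (θ j) (x p) : ℝ)) := by
    intro p; unfold net
    exact Finset.sum_congr rfl fun j _ => by rw [max_eq_act_mul]
  have hinner_v : ∀ j p, (inner ℝ (v j) (x p) : ℝ)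
      = u j * ∑ i, (lam i * y i * act (θ j) (x i)) * (inner ℝ (x i) (x p) : ℝ) := by
    intro j p
    simp only [hvdef]
    rw [real_inner_smul_left, sum_inner]
    congr 1
    exact Finset.sum_congr rfl fun i _ => real_inner_smul_left _ _ _
  -- margin lower bound
  have hmargin : ∀ p, 0.9 * (lam p * A p) - φ * (∑ i, lam i * A i) - 0.42 ≤ y p * net u θ (x p) := by
    intro p
    obtain ⟨g, hg⟩ : ∃ g : Fin n → Fin m → ℝ, g = fun j i =>
        y p * u j ^ 2 * act (θ j) (x p) * (lam i * y i * act (θ j) (x i)) *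
          (inner ℝ (x i) (x p) : ℝ) := ⟨_, rfl⟩
    have e1 : y p * net u θ (x p)
        = (∑ j, ∑ i, g j i)
          + ∑ j, y p * u j * act (θ j) (x p) * (inner ℝ (θ j - v j) (x p) : ℝ) := by
      rw [hnet, Finset.mul_sum, ← Finset.sum_add_distrib]
      refine Finset.sum_congr rfl fun j _ => ?_
      have hs : (inner ℝ (θ j) (x p) : ℝ) = (inner ℝ (v j) (x p) : ℝ) + (inner ℝ (θ j - v j) (x p) : ℝ) := by
        rw [inner_sub_left]; ring
      rw [hs, hinner_v j p]
      simp only [hg, mul_add, Finset.mul_sum]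
      congr 1
      · exact Finset.sum_congr rfl fun i _ => by ring
      · ring
    have e2 : -(0.42 : ℝ) ≤ ∑ j, y p * u j * act (θ j) (x p) * (inner ℝ (θ j - v j) (x p) : ℝ) := by
      have hterm : ∀ j ∈ Finset.univ, -(|u j| * ‖θ j - v j‖ * 1.05)
          ≤ y p * u j * act (θ j) (x p) * (inner ℝ (θ j - v j) (x p) : ℝ) := by
        intro j _
        have hip2 : |(inner ℝ (θ j - v j) (x p) : ℝ)| ≤ ‖θ j - v j‖ * 1.05 := by
          refine (abs_real_inner_le_norm _ _).trans ?_
          nlinarith [norm_nonneg (θ j - v j), hxub p, norm_nonneg (x p)]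
        have h5 : |u j * (inner ℝ (θ j - v j) (x p) : ℝ)| ≤ |u j| * (‖θ j - v j‖ * 1.05) := by
          rw [abs_mul]
          exact mul_le_mul_of_nonneg_left hip2 (abs_nonneg _)
        have h6 := neg_abs_le (u j * (inner ℝ (θ j - v j) (x p) : ℝ))
        have h7 := le_abs_self (u j * (inner ℝ (θ j - v j) (x p) : ℝ))
        rcases hy p with h1 | h1 <;> rcases act01 (θ j) (x p) with h2 | h2 <;> rw [h1, h2] <;>
          linarith [h5, h6, h7, abs_nonneg (u j * (inner ℝ (θ j - v j) (x p) : ℝ))]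
      have hsum := Finset.sum_le_sum hterm
      have heq : ∑ j, -(|u j| * ‖θ j - v j‖ * 1.05)
          = -((∑ j, |u j| * ‖θ j - v j‖) * 1.05) := by
        rw [Finset.sum_neg_distrib, ← Finset.sum_mul]
      rw [heq] at hsum
      nlinarith [hCS, hsum]
    have e3 : (∑ j, ∑ i, g j i) = (∑ j, g j p) + ∑ j, ∑ i ∈ Finset.univ.erase p, g j i := by
      rw [← Finset.sum_add_distrib]
      exact Finset.sum_congr rfl fun j _ => (Finset.add_sum_erase _ _ (Finset.mem_univ p)).symm
    have e4 : (∑ j, g j p) = lam p * ‖x p‖ ^ 2 * A p := by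
      have h : ∀ j ∈ Finset.univ, g j p = (lam p * ‖x p‖ ^ 2) * (u j ^ 2 * act (θ j) (x p)) := by
        intro j _
        simp only [hg]
        rw [real_inner_self_eq_norm_sq]
        rcases hy p with h1 | h1 <;> rcases act01 (θ j) (x p) with h2 | h2 <;> rw [h1, h2] <;> ring
      rw [Finset.sum_congr rfl h, ← Finset.mul_sum]
      simp only [hAdef]
    have e5 : -(φ * ∑ i, lam i * A i) ≤ ∑ j, ∑ i ∈ Finset.univ.erase p, g j i := by
      rw [Finset.sum_comm]
      have h1 : ∀ i ∈ Finset.univ.erase p, -(φ * (lam i * A i)) ≤ ∑ j, g j i := by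
        intro i hi
        have hipne : i ≠ p := (Finset.mem_erase.mp hi).1
        have hio := abs_le.mp (hortho i p hipne)
        have h2 : ∀ j ∈ Finset.univ,
            -(φ * (lam i * (u j ^ 2 * act (θ j) (x i)))) ≤ g j i := by
          intro j _
          simp only [hg]
          rcases hy p with h1 | h1 <;> rcases hy i with h2 | h2 <;>
            rcases act01 (θ j) (x p) with h3 | h3 <;> rcases act01 (θ j) (x i) with h4 | h4 <;>
            rw [h1, h2, h3, h4] <;>
            nlinarith [sq_nonneg (u j), hlam i, hio.1, hio.2, hφ0,
              mul_nonneg (sq_nonneg (u j)) (hlam i)]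
        have hsum2 := Finset.sum_le_sum h2
        have heq2 : ∑ j, -(φ * (lam i * (u j ^ 2 * act (θ j) (x i))))
            = -(φ * (lam i * A i)) := by
          simp only [hAdef]
          rw [Finset.sum_neg_distrib, ← Finset.mul_sum, ← Finset.mul_sum]
        rw [heq2] at hsum2
        exact hsum2
      have h3 := Finset.sum_le_sum h1
      have h4 : -(φ * ∑ i, lam i * A i) ≤ ∑ i ∈ Finset.univ.erase p, -(φ * (lam i * A i)) := by
        rw [Finset.sum_neg_distrib]
        have h5 : ∑ i ∈ Finset.univ.erase p, φ * (lam i * A i) ≤ ∑ i, φ * (lam i * A i) :=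
          Finset.sum_le_sum_of_subset_of_nonneg (Finset.subset_univ _)
            (fun i _ _ => mul_nonneg hφ0 (mul_nonneg (hlam i) (hA0 i)))
        have h6 : (∑ i, φ * (lam i * A i)) = φ * ∑ i, lam i * A i := by
          rw [Finset.mul_sum]
        linarith
      linarith
    have e6 : 0.9 * (lam p * A p) ≤ lam p * ‖x p‖ ^ 2 * A p := by
      nlinarith [hlam p, hA0 p, hxsqlb p, mul_nonneg (hlam p) (hA0 p)]
    rw [e1, e3, e4]
    linarith
  -- bound on phi * m
  have hφm : φ * (m:ℝ) ≤ 0.1 := by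
    have h4 : φ * (4 * (m:ℝ) * n) ≤ εd := by
      rw [le_div_iff₀ (by positivity : (0:ℝ) < 4 * (m:ℝ) * n)] at hφ
      exact hφ
    nlinarith [mul_nonneg (mul_nonneg hφ0 (le_of_lt hMpos)) (by linarith : (0:ℝ) ≤ (n:ℝ) - 1)]
  -- bound on the multipliers
  have hT0 : ∀ i, 0 ≤ lam i * A i := fun i => mul_nonneg (hlam i) (hA0 i)
  obtain ⟨i0, -, hi0⟩ := Finset.exists_max_image Finset.univ (fun i => lam i * A i)
    ⟨r, Finset.mem_univ r⟩
  have hi0' : ∀ a, lam a * A a ≤ lam i0 * A i0 := fun a => hi0 a (Finset.mem_univ a)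
  have ht0 : 0 ≤ lam i0 * A i0 := hT0 i0
  have hTle : (∑ i, lam i * A i) ≤ (m:ℝ) * (lam i0 * A i0) := by
    calc (∑ i, lam i * A i) ≤ ∑ _i : Fin m, lam i0 * A i0 :=
          Finset.sum_le_sum fun i _ => hi0' i
      _ = (m:ℝ) * (lam i0 * A i0) := by
          rw [Finset.sum_const, Finset.card_univ, Fintype.card_fin, nsmul_eq_mul]
  have hkey : ∀ i, lam i * A i ≤ 2.3 := by
    have hstar : lam i0 * A i0 ≤ 2.3 := by
      rcases le_or_gt (lam i0) 1 with hL | hL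
      · nlinarith [hA1 i0, hA0 i0, hlam i0]
      · have hm1 := hmargin i0
        have hc1 := hcs i0
        have hφT : φ * (∑ i, lam i * A i) ≤ 0.1 * (lam i0 * A i0) := by
          calc φ * (∑ i, lam i * A i) ≤ φ * ((m:ℝ) * (lam i0 * A i0)) :=
                mul_le_mul_of_nonneg_left hTle hφ0
            _ = (φ * (m:ℝ)) * (lam i0 * A i0) := by ring
            _ ≤ 0.1 * (lam i0 * A i0) := mul_le_mul_of_nonneg_right hφm ht0
        have h8 : 0.8 * (lam i0 * A i0) - 1.42 ≤ y i0 * net u θ (x i0) - 1 := by linarith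
        have h9 : lam i0 * (0.8 * (lam i0 * A i0) - 1.42) ≤ δ :=
          le_trans (mul_le_mul_of_nonneg_left h8 (hlam i0)) hc1
        nlinarith [ht0, hL, hδle, h9]
    exact fun i => le_trans (hi0' i) hstar
  -- inner ℝ products with the perturbed weights
  have hipθt : ∀ j, (inner ℝ (θt j) (x r) : ℝ) = (inner ℝ (θ j) (x r) : ℝ)
      - (u j * lam l * y l * act (θ j) (x l)) * (inner ℝ (x l) (x r) : ℝ)
      + (|u j| * lam l * act (θ j) (x l)) * ((εd / (2 * m * n)) *
          ∑ k ∈ Finset.univ.erase l, sgn ((inner ℝ (x k) (θ j) : ℝ)) * (inner ℝ (x k) (x r) : ℝ)) := by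
    intro j
    rw [hθt j]
    simp only [inner_add_left, inner_sub_left, real_inner_smul_left, sum_inner]
  have hrmem : r ∈ Finset.univ.erase l := Finset.mem_erase.mpr ⟨hrl, Finset.mem_univ r⟩
  have hSj : ∀ j, |∑ k ∈ Finset.univ.erase l,
      sgn ((inner ℝ (x k) (θ j) : ℝ)) * (inner ℝ (x k) (x r) : ℝ)| ≤ 1.2 := by
    intro j
    have c1 : |∑ k ∈ Finset.univ.erase l, sgn ((inner ℝ (x k) (θ j) : ℝ)) * (inner ℝ (x k) (x r) : ℝ)|
        ≤ ∑ k ∈ Finset.univ.erase l, |(inner ℝ (x k) (x r) : ℝ)| := by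
      refine le_trans (Finset.abs_sum_le_sum_abs _ _) ?_
      refine le_of_eq (Finset.sum_congr rfl fun k _ => ?_)
      rw [abs_mul, abs_sgn_eq_one, one_mul]
    have c2 : (∑ k ∈ Finset.univ.erase l, |(inner ℝ (x k) (x r) : ℝ)|)
        = |(inner ℝ (x r) (x r) : ℝ)| + ∑ k ∈ (Finset.univ.erase l).erase r, |(inner ℝ (x k) (x r) : ℝ)| :=
      (Finset.add_sum_erase _ _ hrmem).symm
    have c3 : |(inner ℝ (x r) (x r) : ℝ)| ≤ 1.1 := by
      rw [real_inner_self_eq_norm_sq, abs_of_nonneg (sq_nonneg _)]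
      exact hxsqub r
    have c4 : ∑ k ∈ (Finset.univ.erase l).erase r, |(inner ℝ (x k) (x r) : ℝ)| ≤ 0.1 := by
      have c5 : ∑ k ∈ (Finset.univ.erase l).erase r, |(inner ℝ (x k) (x r) : ℝ)|
          ≤ ∑ _k ∈ (Finset.univ.erase l).erase r, φ :=
        Finset.sum_le_sum fun k hk => hortho k r (Finset.mem_erase.mp hk).1
      have c6 : (∑ _k ∈ (Finset.univ.erase l).erase r, φ)
          = (((Finset.univ.erase l).erase r).card : ℝ) * φ := by
        rw [Finset.sum_const, nsmul_eq_mul]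
      have c7 : ((((Finset.univ.erase l).erase r).card : ℕ) : ℝ) ≤ (m:ℝ) := by
        have hcard : ((Finset.univ.erase l).erase r).card ≤ m := by
          refine le_trans (Finset.card_le_card (Finset.subset_univ _)) ?_
          simp
        exact_mod_cast hcard
      have c8 : (((Finset.univ.erase l).erase r).card : ℝ) * φ ≤ (m:ℝ) * φ :=
        mul_le_mul_of_nonneg_right c7 hφ0
      nlinarith [hφm]
    linarith [c1, c2.le, c3, c4, c2.ge]
  -- main perturbation bound
  have hdiff : |net u θt (x r) - net u θ (x r)|
      ≤ lam l * A l * (φ + 1.2 * (εd / (2 * m * n))) := by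
    have hc0 : (0:ℝ) ≤ εd / (2 * m * n) := by positivity
    have e : net u θt (x r) - net u θ (x r)
        = ∑ j, u j * (max ((inner ℝ (θt j) (x r) : ℝ)) 0 - max ((inner ℝ (θ j) (x r) : ℝ)) 0) := by
      unfold net
      rw [← Finset.sum_sub_distrib]
      exact Finset.sum_congr rfl fun j _ => by ring
    rw [e]
    have perj : ∀ j ∈ Finset.univ,
        |u j * (max ((inner ℝ (θt j) (x r) : ℝ)) 0 - max ((inner ℝ (θ j) (x r) : ℝ)) 0)|
        ≤ (lam l * (φ + 1.2 * (εd / (2 * m * n)))) * (u j ^ 2 * act (θ j) (x l)) := by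
      intro j _
      have hb : |max ((inner ℝ (θt j) (x r) : ℝ)) 0 - max ((inner ℝ (θ j) (x r) : ℝ)) 0|
          ≤ |(inner ℝ (θt j) (x r) : ℝ) - (inner ℝ (θ j) (x r) : ℝ)| :=
        abs_max_sub_max_le_abs _ _ _
      have hd : (inner ℝ (θt j) (x r) : ℝ) - (inner ℝ (θ j) (x r) : ℝ)
          = -((u j * lam l * y l * act (θ j) (x l)) * (inner ℝ (x l) (x r) : ℝ))
            + (|u j| * lam l * act (θ j) (x l)) * ((εd / (2 * m * n)) *
              ∑ k ∈ Finset.univ.erase l, sgn ((inner ℝ (x k) (θ j) : ℝ)) * (inner ℝ (x k) (x r) : ℝ)) := by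
        rw [hipθt j]; ring
      have h1 : |(u j * lam l * y l * act (θ j) (x l)) * (inner ℝ (x l) (x r) : ℝ)|
          ≤ |u j| * (lam l * act (θ j) (x l)) * φ := by
        rw [abs_mul, abs_mul, abs_mul, abs_mul, hyabs l, abs_of_nonneg (hlam l),
          abs_of_nonneg (act_nonneg _ _)]
        have hio := hortho l r (Ne.symm hrl)
        have hnn : (0:ℝ) ≤ |u j| * lam l * 1 * act (θ j) (x l) := by
          rw [mul_one]
          exact mul_nonneg (mul_nonneg (abs_nonneg _) (hlam l)) (act_nonneg _ _)
        calc |u j| * lam l * 1 * act (θ j) (x l) * |(inner ℝ (x l) (x r) : ℝ)|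
            ≤ |u j| * lam l * 1 * act (θ j) (x l) * φ := mul_le_mul_of_nonneg_left hio hnn
          _ = |u j| * (lam l * act (θ j) (x l)) * φ := by ring
      have h2 : |(|u j| * lam l * act (θ j) (x l)) * ((εd / (2 * m * n)) *
            ∑ k ∈ Finset.univ.erase l, sgn ((inner ℝ (x k) (θ j) : ℝ)) * (inner ℝ (x k) (x r) : ℝ))|
          ≤ |u j| * (lam l * act (θ j) (x l)) * (1.2 * (εd / (2 * m * n))) := by
        have hbnn : (0:ℝ) ≤ |u j| * lam l * act (θ j) (x l) :=
          mul_nonneg (mul_nonneg (abs_nonneg _) (hlam l)) (act_nonneg _ _)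
        rw [abs_mul (|u j| * lam l * act (θ j) (x l)) _, abs_of_nonneg hbnn,
          abs_mul (εd / (2 * (m:ℝ) * n)) _, abs_of_nonneg hc0]
        have hnn2 : (0:ℝ) ≤ (|u j| * lam l * act (θ j) (x l)) * (εd / (2 * m * n)) :=
          mul_nonneg hbnn hc0
        calc (|u j| * lam l * act (θ j) (x l)) * ((εd / (2 * m * n)) *
              |∑ k ∈ Finset.univ.erase l, sgn ((inner ℝ (x k) (θ j) : ℝ)) * (inner ℝ (x k) (x r) : ℝ)|)
            = ((|u j| * lam l * act (θ j) (x l)) * (εd / (2 * m * n))) *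
              |∑ k ∈ Finset.univ.erase l, sgn ((inner ℝ (x k) (θ j) : ℝ)) * (inner ℝ (x k) (x r) : ℝ)| := by
              ring
          _ ≤ ((|u j| * lam l * act (θ j) (x l)) * (εd / (2 * m * n))) * 1.2 :=
              mul_le_mul_of_nonneg_left (hSj j) hnn2
          _ = |u j| * (lam l * act (θ j) (x l)) * (1.2 * (εd / (2 * m * n))) := by ring
      have h3 : |(inner ℝ (θt j) (x r) : ℝ) - (inner ℝ (θ j) (x r) : ℝ)|
          ≤ |u j| * (lam l * act (θ j) (x l)) * (φ + 1.2 * (εd / (2 * m * n))) := by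
        rw [hd]
        refine le_trans (abs_add_le _ _) ?_
        rw [abs_neg]
        linarith [h1, h2]
      calc |u j * (max ((inner ℝ (θt j) (x r) : ℝ)) 0 - max ((inner ℝ (θ j) (x r) : ℝ)) 0)|
          = |u j| * |max ((inner ℝ (θt j) (x r) : ℝ)) 0 - max ((inner ℝ (θ j) (x r) : ℝ)) 0| := by
            rw [abs_mul]
        _ ≤ |u j| * (|u j| * (lam l * act (θ j) (x l)) * (φ + 1.2 * (εd / (2 * m * n)))) := by
            refine mul_le_mul_of_nonneg_left (le_trans hb h3) (abs_nonneg _)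
        _ = (lam l * (φ + 1.2 * (εd / (2 * m * n)))) * (u j ^ 2 * act (θ j) (x l)) := by
            rw [← sq_abs]; ring
    refine le_trans (Finset.abs_sum_le_sum_abs _ _) ?_
    refine le_trans (Finset.sum_le_sum perj) ?_
    rw [← Finset.mul_sum]
    have hAl : (∑ j, u j ^ 2 * act (θ j) (x l)) = A l := by rw [hAdef]
    rw [hAl]
    exact le_of_eq (by ring)
  -- conclusion
  have hφK : φ ≤ (εd / ((m:ℝ) * n)) / 4 := by
    refine hφ.trans (le_of_eq ?_)
    ring
  have hK0 : (0:ℝ) ≤ εd / ((m:ℝ) * n) := by positivity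
  have hfin : |net u θt (x r) - net u θ (x r)| ≤ 9 * εd / ((m:ℝ) * n) := by
    have hb1 : φ + 1.2 * (εd / (2 * (m:ℝ) * n)) ≤ 0.85 * (εd / ((m:ℝ) * n)) := by
      have he : εd / (2 * (m:ℝ) * n) = (εd / ((m:ℝ) * n)) / 2 := by ring
      rw [he]
      linarith [hφK]
    have hx1 : (0:ℝ) ≤ φ + 1.2 * (εd / (2 * (m:ℝ) * n)) := by positivity
    have hb2 : lam l * A l * (φ + 1.2 * (εd / (2 * (m:ℝ) * n)))
        ≤ 2.3 * (0.85 * (εd / ((m:ℝ) * n))) :=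
      mul_le_mul (hkey l) hb1 hx1 (by norm_num)
    refine hdiff.trans (hb2.trans ?_)
    have he2 : 9 * εd / ((m:ℝ) * n) = 9 * (εd / ((m:ℝ) * n)) := by ring
    rw [he2]
    linarith [hK0]
  have habs : |y r * (net u θt (x r) - net u θ (x r))| ≤ 9 * εd / ((m:ℝ) * n) := by
    rw [abs_mul, hyabs r, one_mul]
    exact hfin
  exact abs_le.mp habs
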